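/- Let m : [0,1] → ℝ≥0 be absolutely continuous with m(0) = m₀ and satisfy |m'(t)| ≤ √(2D·m(t)) for a.e. t, for some constant D ≥ 0. Then ∫₀¹ m(t) dt ≤ m₀ + √(2D) · √(∫₀¹ m(t) dt), and consequently ∫₀¹ m(t) dt ≤ (√(m₀ + D/2) + √(D/2))² (a bound depending only on m₀ and D). -/

import Mathlib

open MeasureTheory Set

/-- Mass estimate: if `m ≥ 0` is absolutely continuous on `[0,1]` (represented by an integral
representation with integrable a.e.-derivative `m'`), `m(0) = m₀` and `|m'(t)| ≤ √(2D·m(t))`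
a.e., then `∫₀¹ m ≤ m₀ + √(2D)·√(∫₀¹ m)` and hence `∫₀¹ m ≤ (√(m₀+D/2) + √(D/2))²`. -/
theorem mass_bound (m m' : ℝ → ℝ) (m₀ D : ℝ) (hD : 0 ≤ D)
    (hm0 : m 0 = m₀)
    (hnn : ∀ t ∈ Icc (0 : ℝ) 1, 0 ≤ m t)
    (hint : IntegrableOn m' (Icc (0 : ℝ) 1))
    (hrep : ∀ t ∈ Icc (0 : ℝ) 1, m t = m₀ + ∫ s in (0 : ℝ)..t, m' s)
    (hbound : ∀ᵐ s ∂(volume.restrict (Icc (0 : ℝ) 1)),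
      |m' s| ≤ Real.sqrt (2 * D * m s)) :
    (∫ t in (0 : ℝ)..1, m t) ≤
        m₀ + Real.sqrt (2 * D) * Real.sqrt (∫ t in (0 : ℝ)..1, m t) ∧
      (∫ t in (0 : ℝ)..1, m t) ≤
        (Real.sqrt (m₀ + D / 2) + Real.sqrt (D / 2)) ^ 2 := by
  have h01 : (0:ℝ) ∈ Icc (0:ℝ) 1 := by norm_num
  have hm₀nn : 0 ≤ m₀ := hm0 ▸ hnn 0 h01
  set I := ∫ t in (0:ℝ)..1, m t with hIdef
  -- continuity of m on Icc 0 1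
  have huicc : uIcc (0:ℝ) 1 = Icc 0 1 := by rw [uIcc_of_le]; norm_num
  have hcontF : ContinuousOn (fun x => ∫ s in (0:ℝ)..x, m' s) (Icc 0 1) := by
    have := intervalIntegral.continuousOn_primitive_interval (a := (0:ℝ)) (b := 1)
      (f := m') (μ := volume) (by rwa [huicc])
    rwa [huicc] at this
  have hcont : ContinuousOn m (Icc 0 1) := by
    have h : ContinuousOn (fun t => m₀ + ∫ s in (0:ℝ)..t, m' s) (Icc 0 1) :=
      (continuousOn_const (c := m₀)).add hcontF
    exact h.congr hrep
  have hmint : IntegrableOn m (Icc 0 1) := hcont.integrableOn_Icc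
  have hmint' : IntegrableOn m (Ioc 0 1) := hmint.mono_set Ioc_subset_Icc_self
  have hInn : 0 ≤ I := intervalIntegral.integral_nonneg (by norm_num) hnn
  -- integrability of s ↦ √(2D * m s)
  have hcontg : ContinuousOn (fun s => Real.sqrt (2 * D * m s)) (Icc 0 1) :=
    Real.continuous_sqrt.comp_continuousOn (continuousOn_const.mul hcont)
  have hgint : IntegrableOn (fun s => Real.sqrt (2 * D * m s)) (Icc 0 1) :=
    hcontg.integrableOn_Icc
  -- step: A := ∫ |m'| over Ioc 0 1
  set A := ∫ s in Ioc (0:ℝ) 1, |m' s| with hAdef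
  have habsint : IntegrableOn (fun s => |m' s|) (Ioc 0 1) :=
    (hint.mono_set Ioc_subset_Icc_self).abs
  -- pointwise bound m t ≤ m₀ + A
  have hpt : ∀ t ∈ Icc (0:ℝ) 1, m t ≤ m₀ + A := by
    intro t ht
    rw [hrep t ht]
    have h1 : (∫ s in (0:ℝ)..t, m' s) ≤ ∫ s in (0:ℝ)..t, |m' s| :=
      le_trans (le_abs_self _) (intervalIntegral.abs_integral_le_integral_abs ht.1)
    have h2 : (∫ s in (0:ℝ)..t, |m' s|) ≤ ∫ s in (0:ℝ)..1, |m' s| := by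
      refine intervalIntegral.integral_mono_interval le_rfl ht.1 ht.2 ?_ ?_
      · filter_upwards with s using abs_nonneg _
      · rw [intervalIntegrable_iff_integrableOn_Ioc_of_le (by norm_num)]
        exact habsint
    have h3 : (∫ s in (0:ℝ)..1, |m' s|) = A := by
      rw [intervalIntegral.integral_of_le (by norm_num)]
    linarith
  -- I ≤ m₀ + A
  have hI1 : I ≤ m₀ + A := by
    have : I = ∫ t in Ioc (0:ℝ) 1, m t := intervalIntegral.integral_of_le (by norm_num)
    rw [this]
    have hconst : (∫ _ in Ioc (0:ℝ) 1, (m₀ + A)) = m₀ + A := by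
      simp [Real.volume_Ioc]
    calc (∫ t in Ioc (0:ℝ) 1, m t) ≤ ∫ _ in Ioc (0:ℝ) 1, (m₀ + A) := by
          refine setIntegral_mono_on hmint' (integrableOn_const (by simp)) measurableSet_Ioc ?_
          intro t ht; exact hpt t (Ioc_subset_Icc_self ht)
      _ = m₀ + A := hconst
  -- A ≤ ∫ √(2D m)
  have hA2 : A ≤ ∫ s in Ioc (0:ℝ) 1, Real.sqrt (2 * D * m s) := by
    refine integral_mono_ae habsint (hgint.mono_set Ioc_subset_Icc_self) ?_
    exact ae_mono (Measure.restrict_mono Ioc_subset_Icc_self le_rfl) hbound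
  -- main sqrt bound
  have hkey : I ≤ m₀ + Real.sqrt (2 * D) * Real.sqrt I := by
    rcases eq_or_lt_of_le hInn with h0 | hIpos
    · rw [← h0]
      simp [hm₀nn]
    · set c := Real.sqrt (2 * D / I) with hc
      have hcn : 0 ≤ c := Real.sqrt_nonneg _
      have hptw : ∀ s ∈ Icc (0:ℝ) 1, Real.sqrt (2 * D * m s) ≤ c * (I + m s) / 2 := by
        intro s hs
        have hms : 0 ≤ m s := hnn s hs
        have heq : 2 * D * m s = (2 * D / I) * (I * m s) := by
          field_simp
        rw [heq, Real.sqrt_mul (by positivity)]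
        have hamgm : Real.sqrt (I * m s) ≤ (I + m s) / 2 := by
          have := Real.sqrt_le_sqrt
            (show I * m s ≤ ((I + m s) / 2) ^ 2 by nlinarith [sq_nonneg (I - m s)])
          rwa [Real.sqrt_sq (by positivity)] at this
        calc c * Real.sqrt (I * m s) ≤ c * ((I + m s) / 2) :=
              mul_le_mul_of_nonneg_left hamgm hcn
          _ = c * (I + m s) / 2 := by ring
      have hint2 : (∫ s in Ioc (0:ℝ) 1, Real.sqrt (2 * D * m s)) ≤
          ∫ s in Ioc (0:ℝ) 1, c * (I + m s) / 2 := by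
        refine setIntegral_mono_on (hgint.mono_set Ioc_subset_Icc_self) ?_ measurableSet_Ioc ?_
        · exact (((integrableOn_const (by simp)).add hmint').const_mul c).div_const 2
        · intro s hs; exact hptw s (Ioc_subset_Icc_self hs)
      have hval : (∫ s in Ioc (0:ℝ) 1, c * (I + m s) / 2) = c * I := by
        have h1 : (∫ s in Ioc (0:ℝ) 1, c * (I + m s) / 2)
            = (c / 2) * ∫ s in Ioc (0:ℝ) 1, (I + m s) := by
          rw [← integral_const_mul]
          congr 1; ext s; ring
        rw [h1, integral_add (integrableOn_const (C := I) (s := Ioc (0:ℝ) 1) (μ := volume) (by simp)) hmint']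
        have h2 : (∫ _ in Ioc (0:ℝ) 1, I) = I := by simp [Real.volume_Ioc]
        have h3 : (∫ s in Ioc (0:ℝ) 1, m s) = I :=
          (intervalIntegral.integral_of_le (by norm_num)).symm
        rw [h2, h3]; ring
      have hcI : c * I = Real.sqrt (2 * D) * Real.sqrt I := by
        have h1 : I = Real.sqrt (I ^ 2) := (Real.sqrt_sq hIpos.le).symm
        calc c * I = Real.sqrt (2 * D / I) * Real.sqrt (I ^ 2) := by rw [← h1]
          _ = Real.sqrt (2 * D / I * I ^ 2) := (Real.sqrt_mul (by positivity) _).symm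
          _ = Real.sqrt (2 * D * I) := by congr 1; field_simp
          _ = Real.sqrt (2 * D) * Real.sqrt I := Real.sqrt_mul (by positivity) I
      linarith [hI1, hA2, hint2, hval, hcI.le, hcI.ge]
  refine ⟨hkey, ?_⟩
  set a := Real.sqrt (m₀ + D / 2) with ha
  set b := Real.sqrt (D / 2) with hb
  have han : 0 ≤ a := Real.sqrt_nonneg _
  have hbn : 0 ≤ b := Real.sqrt_nonneg _
  have ha2 : a ^ 2 = m₀ + D / 2 := Real.sq_sqrt (by linarith)
  have hb2 : b ^ 2 = D / 2 := Real.sq_sqrt (by linarith)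
  set x := Real.sqrt I with hx
  have hxn : 0 ≤ x := Real.sqrt_nonneg _
  have hx2 : x ^ 2 = I := Real.sq_sqrt hInn
  have hsd : Real.sqrt (2 * D) = 2 * b := by
    rw [hb, show (2:ℝ) * D = 2 ^ 2 * (D / 2) by ring,
      Real.sqrt_mul (by positivity) (D / 2), Real.sqrt_sq (by norm_num : (0:ℝ) ≤ 2)]
  rw [hsd] at hkey
  have hxab : x ≤ a + b := by
    by_contra h
    push_neg at h
    nlinarith [mul_pos (show (0:ℝ) < x - b - a by linarith)
      (show (0:ℝ) < x - b + a by linarith)]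
  calc I = x ^ 2 := hx2.symm
    _ ≤ (a + b) ^ 2 := pow_le_pow_left₀ hxn hxab 2
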